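/- Suppose P is twice differentiable with H_L-Lipschitz Hessian, ‖∇P(x) − g‖ ≤ C₁‖s‖², ‖∇²P(x) − H‖ ≤ C₂‖s‖, H ⪰ (μ/2)I for μ > 0, and s = −H⁻¹g (a Newton step). If additionally (8/μ²)C₁²‖s‖² ≤ 1/2, then ‖∇P(x+s)‖ ≤ (16/μ²)(H_L/2 + C₁ + C₂)‖∇P(x)‖² (quadratic convergence of the inexact Newton step). -/

import Mathlib

open scoped RealInnerProductSpace

set_option maxHeartbeats 1000000
set_option synthInstance.maxHeartbeats 200000

/-- Quadratic convergence of the inexact Newton step: if `P` has `H_L`-Lipschitz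
Hessian, `‖∇P(x) − g‖ ≤ C₁‖s‖²`, `‖∇²P(x) − H‖ ≤ C₂‖s‖`, `H ⪰ (μ/2)I`, `s = −H⁻¹g`, and
`(8/μ²)C₁²‖s‖² ≤ 1/2`, then `‖∇P(x+s)‖ ≤ (16/μ²)(H_L/2 + C₁ + C₂)‖∇P(x)‖²`. -/
theorem stmt19 {n : ℕ} (HL C1 C2 μ : ℝ)
    (hHL : 0 < HL) (hC1 : 0 ≤ C1) (hC2 : 0 ≤ C2) (hμ : 0 < μ)
    (P : EuclideanSpace ℝ (Fin n) → ℝ)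
    (gP : EuclideanSpace ℝ (Fin n) → EuclideanSpace ℝ (Fin n))
    (hessP : EuclideanSpace ℝ (Fin n) → (EuclideanSpace ℝ (Fin n) →L[ℝ] EuclideanSpace ℝ (Fin n)))
    (hgrad : ∀ x, HasGradientAt P (gP x) x)
    (hhess : ∀ x, HasFDerivAt gP (hessP x) x)
    (hlipHess : ∀ a b, ‖hessP a - hessP b‖ ≤ HL * ‖a - b‖)
    (x g s : EuclideanSpace ℝ (Fin n))
    (H : EuclideanSpace ℝ (Fin n) →L[ℝ] EuclideanSpace ℝ (Fin n)) (hsa : IsSelfAdjoint H)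
    (hpd : ∀ v : EuclideanSpace ℝ (Fin n), (μ / 2) * ‖v‖ ^ 2 ≤ ⟪v, H v⟫)
    (hgerr : ‖gP x - g‖ ≤ C1 * ‖s‖ ^ 2)
    (hHerr : ‖hessP x - H‖ ≤ C2 * ‖s‖)
    (hnewton : H s = -g)
    (hsmall : (8 / μ ^ 2) * C1 ^ 2 * ‖s‖ ^ 2 ≤ 1 / 2) :
    ‖gP (x + s)‖ ≤ (16 / μ ^ 2) * (HL / 2 + C1 + C2) * ‖gP x‖ ^ 2 := by
  -- continuity of hessP
  have hlip : LipschitzWith (Real.toNNReal HL) hessP := by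
    apply LipschitzWith.of_dist_le_mul
    intro a b
    simpa [dist_eq_norm, Real.coe_toNNReal _ hHL.le] using hlipHess a b
  have hcont : Continuous fun t : ℝ => (hessP (x + t • s)) s := by
    have hc2 : Continuous fun t : ℝ => x + t • s := by continuity
    exact (hlip.continuous.comp hc2).clm_apply continuous_const
  -- derivative of t ↦ gP (x + t • s)
  have hφ : ∀ t : ℝ, HasDerivAt (fun t : ℝ => gP (x + t • s)) ((hessP (x + t • s)) s) t := by
    intro t
    have h1 : HasDerivAt (fun t : ℝ => x + t • s) s t :=
      by simpa using ((hasDerivAt_id t).smul_const s).const_add x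
    exact (hhess (x + t • s)).comp_hasDerivAt t h1
  have hint : IntervalIntegrable (fun t : ℝ => (hessP (x + t • s)) s) MeasureTheory.volume 0 1 :=
    hcont.intervalIntegrable 0 1
  have key : (∫ t in (0:ℝ)..1, (hessP (x + t • s)) s) = gP (x + s) - gP x := by
    have := intervalIntegral.integral_eq_sub_of_hasDerivAt (fun t _ => hφ t) hint
    simpa using this
  have h2 : gP (x + s) - gP x - (hessP x) s
      = ∫ t in (0:ℝ)..1, ((hessP (x + t • s)) s - (hessP x) s) := by
    rw [intervalIntegral.integral_sub hint (intervalIntegrable_const), key]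
    simp
  -- Taylor bound
  have htaylor : ‖gP (x + s) - gP x - (hessP x) s‖ ≤ HL / 2 * ‖s‖ ^ 2 := by
    rw [h2]
    have hbound : ∀ t ∈ Set.uIoc (0:ℝ) 1,
        ‖(hessP (x + t • s)) s - (hessP x) s‖ ≤ HL * ‖s‖ ^ 2 * t := by
      intro t ht
      rw [Set.uIoc_of_le (by norm_num : (0:ℝ) ≤ 1)] at ht
      have h3 : ‖(hessP (x + t • s)) s - (hessP x) s‖
          ≤ ‖hessP (x + t • s) - hessP x‖ * ‖s‖ := by
        have := (hessP (x + t • s) - hessP x).le_opNorm s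
        simpa using this
      have h4 : ‖hessP (x + t • s) - hessP x‖ ≤ HL * (t * ‖s‖) := by
        have := hlipHess (x + t • s) x
        simpa [norm_smul, abs_of_nonneg ht.1.le] using this
      calc ‖(hessP (x + t • s)) s - (hessP x) s‖ ≤ HL * (t * ‖s‖) * ‖s‖ :=
            h3.trans (by nlinarith [norm_nonneg s])
        _ = HL * ‖s‖ ^ 2 * t := by ring
    have h5 := intervalIntegral.norm_integral_le_abs_of_norm_le
      (μ := MeasureTheory.volume)
      (f := fun t => (hessP (x + t • s)) s - (hessP x) s)
      (g := fun t : ℝ => HL * ‖s‖ ^ 2 * t)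
      (MeasureTheory.ae_restrict_of_forall_mem measurableSet_uIoc hbound)
      ((continuous_const.mul continuous_id).intervalIntegrable 0 1)
    have h6 : (∫ t in (0:ℝ)..1, HL * ‖s‖ ^ 2 * t) = HL / 2 * ‖s‖ ^ 2 := by
      rw [intervalIntegral.integral_const_mul, integral_id]
      ring
    rw [h6] at h5
    calc _ ≤ |HL / 2 * ‖s‖ ^ 2| := h5
      _ = HL / 2 * ‖s‖ ^ 2 := abs_of_nonneg (by positivity)
  -- main norm bound on gP (x+s)
  have hmain : ‖gP (x + s)‖ ≤ (HL / 2 + C1 + C2) * ‖s‖ ^ 2 := by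
    have hdecomp : gP (x + s)
        = (gP (x + s) - gP x - (hessP x) s) + (gP x - g) + ((hessP x - H) s) := by
      have : (hessP x - H) s = (hessP x) s - H s := by simp
      rw [this, hnewton]
      abel
    have hA : ‖(hessP x - H) s‖ ≤ C2 * ‖s‖ * ‖s‖ :=
      ((hessP x - H).le_opNorm s).trans
        (mul_le_mul_of_nonneg_right hHerr (norm_nonneg s))
    have hn1 := norm_add_le (gP (x + s) - gP x - (hessP x) s + (gP x - g)) ((hessP x - H) s)
    have hn2 := norm_add_le (gP (x + s) - gP x - (hessP x) s) (gP x - g)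
    rw [← hdecomp] at hn1
    nlinarith [htaylor, hgerr, hA, norm_nonneg s]
  -- bound ‖s‖ by ‖gP x‖
  have hip : (μ / 2) * ‖s‖ ^ 2 ≤ ‖s‖ * ‖g‖ := by
    have h7 := hpd s
    rw [hnewton] at h7
    have h8 : ⟪s, -g⟫ ≤ ‖s‖ * ‖g‖ := by
      have := real_inner_le_norm s (-g)
      simpa using this
    linarith
  have hg : ‖g‖ ≤ ‖gP x‖ + C1 * ‖s‖ ^ 2 := by
    have := norm_sub_norm_le (gP x) g
    have h9 := norm_sub_rev (gP x) g
    nlinarith [norm_sub_norm_le g (gP x), hgerr]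
  have hsmall' : 16 * C1 ^ 2 * ‖s‖ ^ 2 ≤ μ ^ 2 := by
    have : (8 / μ ^ 2) * C1 ^ 2 * ‖s‖ ^ 2 = 8 * C1 ^ 2 * ‖s‖ ^ 2 / μ ^ 2 := by ring
    rw [this, div_le_iff₀ (by positivity)] at hsmall
    nlinarith
  have hC1s : C1 * ‖s‖ ≤ μ / 4 := by
    nlinarith [mul_nonneg hC1 (norm_nonneg s)]
  have hkey : μ ^ 2 * ‖s‖ ^ 2 ≤ 16 * ‖gP x‖ ^ 2 := by
    have ha := norm_nonneg s
    have hb := norm_nonneg (gP x)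
    have h10 : μ * ‖s‖ ^ 2 ≤ 4 * ‖s‖ * ‖gP x‖ := by
      nlinarith [mul_nonneg ha (norm_nonneg g)]
    nlinarith [sq_nonneg (μ * ‖s‖ - 4 * ‖gP x‖), mul_nonneg ha hb]
  calc ‖gP (x + s)‖ ≤ (HL / 2 + C1 + C2) * ‖s‖ ^ 2 := hmain
    _ ≤ (HL / 2 + C1 + C2) * (16 / μ ^ 2 * ‖gP x‖ ^ 2) := by
        have h12 : ‖s‖ ^ 2 ≤ 16 / μ ^ 2 * ‖gP x‖ ^ 2 := by
          rw [div_mul_eq_mul_div, le_div_iff₀ (by positivity)]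
          nlinarith [hkey]
        exact mul_le_mul_of_nonneg_left h12 (by linarith)
    _ = (16 / μ ^ 2) * (HL / 2 + C1 + C2) * ‖gP x‖ ^ 2 := by ring
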